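/- Let K be a field, let q, r ∈ K be nonzero, let c, j ∈ K with c ≠ 0, and assume the deformed integers (k)_r := Σ_{i=1}^{k} r^{1−2i} are nonzero for every integer k ≥ 1. Let F be the K-vector space with basis {u_k : k ∈ ℕ} and define K-linear endomorphisms of F by A₊·u_k = u_{k+1}; A₋·u_k = c·(k)_r·u_{k−1} (with A₋·u₀ = 0); N·u_k = (q^{−2k}·j + (k)_q)·u_k; E·u_k = c·u_k. Then these operators satisfy the U_{qr}(h₄) relations, and the Fock module F is irreducible: every K-subspace of F invariant under N, A₊, A₋ and E is either {0} or all of F. -/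

import Mathlib

def pIntF {K : Type*} [Field K] (r : K) (k : ℕ) : K :=
  ∑ i ∈ Finset.range k, r ^ (-1 - 2 * (i : ℤ))

lemma pIntF_succ {K : Type*} [Field K] (r : K) (k : ℕ) :
    pIntF r (k+1) = pIntF r k + r ^ (-1 - 2 * (k : ℤ)) := by
  simp [pIntF, Finset.sum_range_succ]

lemma pInt_step {K : Type*} [Field K] (x : K) (hx : x ≠ 0) (k : ℕ) :
    x * pIntF x (k+1) - x⁻¹ * pIntF x k = 1 := by
  induction k with
  | zero => simp [pIntF_succ, pIntF]; field_simp
  | succ n ih =>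
      rw [pIntF_succ x (n+1), pIntF_succ x n]
      have h1 : x * x ^ (-1 - 2 * ((n:ℤ)+1)) = x⁻¹ * x ^ (-1 - 2 * (n:ℤ)) := by
        rw [← zpow_one_add₀ hx, ← zpow_neg_one, ← zpow_add₀ hx]
        ring_nf
      push_cast
      push_cast at h1
      linear_combination ih + h1 - x * pIntF_succ x n

lemma lam_step {K : Type*} [Field K] (q j : K) (hq : q ≠ 0) (k : ℕ) :
    q * (q ^ (-(2 * ((k:ℤ)+1))) * j + pIntF q (k+1))
      - q⁻¹ * (q ^ (-(2 * (k:ℤ))) * j + pIntF q k) = 1 := by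
  have hj : q * q ^ (-(2 * ((k:ℤ)+1))) = q⁻¹ * q ^ (-(2 * (k:ℤ))) := by
    rw [← zpow_one_add₀ hq, ← zpow_neg_one, ← zpow_add₀ hq]
    ring_nf
  linear_combination j * hj + pInt_step q hq k

theorem qr_oscillator_fock_module
    {K : Type*} [Field K] (q r c j : K)
    (hq0 : q ≠ 0) (hr0 : r ≠ 0) (hc0 : c ≠ 0)
    (hrk : ∀ k : ℕ, 1 ≤ k → pIntF r k ≠ 0)
    (N Ap Am E : Module.End K (ℕ →₀ K))
    (hAp : ∀ k : ℕ, Ap (Finsupp.single k 1) = Finsupp.single (k + 1) 1)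
    (hAm0 : Am (Finsupp.single 0 1) = 0)
    (hAm : ∀ k : ℕ, Am (Finsupp.single (k + 1) 1)
      = (c * pIntF r (k + 1)) • Finsupp.single k 1)
    (hN : ∀ k : ℕ, N (Finsupp.single k 1)
      = (q ^ (-(2 * (k : ℤ))) * j + pIntF q k) • Finsupp.single k 1)
    (hE : ∀ k : ℕ, E (Finsupp.single k 1) = c • Finsupp.single k 1) :
    Commute E N ∧ Commute E Ap ∧ Commute E Am ∧
    q • (N * Ap) - q⁻¹ • (Ap * N) = Ap ∧
    q • (Am * N) - q⁻¹ • (N * Am) = Am ∧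
    r • (Am * Ap) - r⁻¹ • (Ap * Am) = E ∧
    (∀ p : Submodule K (ℕ →₀ K),
      (∀ v ∈ p, N v ∈ p) → (∀ v ∈ p, Ap v ∈ p) → (∀ v ∈ p, Am v ∈ p) →
      (∀ v ∈ p, E v ∈ p) → p = ⊥ ∨ p = ⊤) := by
  have hE' : E = c • (1 : Module.End K (ℕ →₀ K)) := by
    apply Module.Basis.ext Finsupp.basisSingleOne
    intro k
    simpa using hE k
  have hEcomm : ∀ T : Module.End K (ℕ →₀ K), Commute E T := by
    intro T
    rw [hE']
    exact (Commute.one_left T).smul_left c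
  refine ⟨hEcomm N, hEcomm Ap, hEcomm Am, ?_, ?_, ?_, ?_⟩
  · apply Module.Basis.ext Finsupp.basisSingleOne
    intro k
    simp only [Finsupp.coe_basisSingleOne, LinearMap.sub_apply, LinearMap.smul_apply,
      Module.End.mul_apply, hAp, hN, map_smul, smul_smul]
    rw [← sub_smul]
    have := lam_step q j hq0 k
    push_cast at this ⊢
    rw [this, one_smul]
  · apply Module.Basis.ext Finsupp.basisSingleOne
    intro k
    cases k with
    | zero =>
        simp only [Finsupp.coe_basisSingleOne, LinearMap.sub_apply, LinearMap.smul_apply,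
          Module.End.mul_apply, hAm0, map_zero, hN, map_smul, smul_zero, sub_zero]
    | succ m =>
        simp only [Finsupp.coe_basisSingleOne, LinearMap.sub_apply, LinearMap.smul_apply,
          Module.End.mul_apply, hN, hAm, map_smul, smul_smul]
        rw [← sub_smul]
        congr 1
        have := lam_step q j hq0 m
        push_cast at this ⊢
        linear_combination (c * pIntF r (m+1)) * this
  · apply Module.Basis.ext Finsupp.basisSingleOne
    intro k
    cases k with
    | zero =>
        simp only [Finsupp.coe_basisSingleOne, LinearMap.sub_apply, LinearMap.smul_apply,
          Module.End.mul_apply, hAp, hAm, hAm0, map_zero, hE, smul_zero, sub_zero, smul_smul]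
        rw [show r * (c * pIntF r (0+1)) = c * (r * pIntF r (0+1) - r⁻¹ * pIntF r 0) from by
          simp [pIntF]; ring]
        rw [pInt_step r hr0 0]
        simp
    | succ m =>
        simp only [Finsupp.coe_basisSingleOne, LinearMap.sub_apply, LinearMap.smul_apply,
          Module.End.mul_apply, hAp, hAm, hE, map_smul, smul_smul]
        rw [← sub_smul]
        congr 1
        have := pInt_step r hr0 (m+1)
        linear_combination c * this
  · intro p hpN hpAp hpAm hpE
    by_cases hbot : p = ⊥
    · exact Or.inl hbot
    right
    -- pointwise formula for Am
    have hAmApply : ∀ (v : ℕ →₀ K) (n : ℕ), Am v n = c * pIntF r (n+1) * v (n+1) := by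
      intro v n
      induction v using Finsupp.induction_linear with
      | zero => simp
      | add f g hf hg => simp [map_add, hf, hg]; ring
      | single k a =>
          have hsa : (Finsupp.single k a : ℕ →₀ K) = a • Finsupp.single k 1 := by
            simp [Finsupp.smul_single]
          rw [hsa, map_smul]
          cases k with
          | zero =>
              simp [hAm0, Finsupp.single_apply]
          | succ m =>
              rw [hAm m]
              simp only [Finsupp.smul_apply, Finsupp.single_apply, smul_eq_mul]
              by_cases h : m = n
              · subst h
                simp only [if_pos rfl]
                ring
              · simp only [h, if_false, if_neg h, smul_zero, mul_zero, smul_eq_mul]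
                have h2 : ¬ (m + 1 = n + 1) := by omega
                simp [h, h2]
    have key : ∀ n : ℕ, ∀ v ∈ p, v ≠ 0 → (∀ m, n < m → v m = 0) →
        (Finsupp.single 0 1 : ℕ →₀ K) ∈ p := by
      intro n
      induction n with
      | zero =>
          intro v hv hv0 hbd
          have hv00 : v 0 ≠ 0 := by
            intro h
            apply hv0
            ext m
            cases m with
            | zero => simpa using h
            | succ m' => simpa using hbd (m'+1) (Nat.succ_pos m')
          have hveq : v = Finsupp.single 0 (v 0) := by
            ext m
            cases m with
            | zero => simp
            | succ m' => simp [Finsupp.single_apply, hbd (m'+1) (Nat.succ_pos m')]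
          have : (Finsupp.single 0 1 : ℕ →₀ K) = (v 0)⁻¹ • v := by
            rw [hveq]
            simp [Finsupp.smul_single, inv_mul_cancel₀ hv00]
          rw [this]
          exact p.smul_mem _ hv
      | succ n ih =>
          intro v hv hv0 hbd
          by_cases h : v (n+1) = 0
          · refine ih v hv hv0 ?_
            intro m hm
            rcases Nat.lt_or_ge m (n+2) with hm2 | hm2
            · have : m = n+1 := by omega
              rw [this]; exact h
            · exact hbd m (by omega)
          · refine ih (Am v) (hpAm v hv) ?_ ?_
            · intro hAmv
              apply h
              have h0 : c * pIntF r (n+1) * v (n+1) = 0 := by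
                have h2 := hAmApply v n
                rw [hAmv] at h2
                simpa using h2.symm
              rcases mul_eq_zero.mp h0 with h1 | h1
              · rcases mul_eq_zero.mp h1 with h2 | h2
                · exact absurd h2 hc0
                · exact absurd h2 (hrk (n+1) (by omega))
              · exact h1
            · intro m hm
              rw [hAmApply v m, hbd (m+1) (by omega), mul_zero]
    -- get a nonzero element
    obtain ⟨v, hv, hv0⟩ := Submodule.exists_mem_ne_zero_of_ne_bot hbot
    have hu0 : (Finsupp.single 0 1 : ℕ →₀ K) ∈ p := by
      refine key (v.support.sup id) v hv hv0 ?_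
      intro m hm
      by_contra h
      have : m ∈ v.support := Finsupp.mem_support_iff.mpr h
      have := Finset.le_sup (f := id) this
      simp at this
      omega
    have hsing : ∀ k : ℕ, (Finsupp.single k 1 : ℕ →₀ K) ∈ p := by
      intro k
      induction k with
      | zero => exact hu0
      | succ m ihm =>
          have := hpAp _ ihm
          rwa [hAp m] at this
    rw [eq_top_iff]
    intro w _
    rw [← Finsupp.sum_single w]
    refine p.sum_mem ?_
    intro i _
    have : (Finsupp.single i (w i) : ℕ →₀ K) = (w i) • Finsupp.single i 1 := by
      simp [Finsupp.smul_single]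
    rw [this]
    exact p.smul_mem _ (hsing i)
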